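/- Let g be a finite-dimensional real Lie algebra containing an abelian ideal a of codimension 2, and J a complex structure on g with J(a) ≠ a and [g,g] ⊄ a. Then a_J := a ∩ J(a) is an ideal of g, and for every x ∈ 𝔟 := a ∩ J(a + [g,g]), the endomorphism of a/a_J induced by ad(Jx) (well defined since [Jx,a] ⊆ a and [Jx,a_J] ⊆ a_J) is nilpotent. Equivalently, for x ∈ 𝔟 \ a_J and y ∈ a with a = a_J ⊕ ℝx ⊕ ℝy, the unique reals a, b, c, d with [Jx,x] − (ax+by) ∈ a_J and [Jx,y] − (cx+dy) ∈ a_J satisfy d = −a and a² + bc = 0. -/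

import Mathlib

open Module

section Defs

variable {L : Type*} [LieRing L] [LieAlgebra ℝ L]

/-- A complex structure on a real Lie algebra: `J² = -id` plus integrability. -/
def IsComplexStructure (J : L →ₗ[ℝ] L) : Prop :=
  (∀ x : L, J (J x) = -x) ∧
  (∀ x y : L, ⁅x, y⁆ - ⁅J x, J y⁆ + J ⁅J x, y⁆ + J ⁅x, J y⁆ = 0)

/-- A Lie algebra is unimodular if every `ad x` is traceless. -/
def IsUnimodularLie (L : Type*) [LieRing L] [LieAlgebra ℝ L] : Prop :=
  ∀ x : L, LinearMap.trace ℝ L (LieAlgebra.ad ℝ L x) = 0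

/-- A Hermitian metric on `(L, J)`: a `J`-compatible inner product. -/
structure HermMetric (J : L →ₗ[ℝ] L) : Type _ where
  B : L →ₗ[ℝ] L →ₗ[ℝ] ℝ
  symm : ∀ x y : L, B x y = B y x
  posdef : ∀ x : L, x ≠ 0 → 0 < B x x
  compat : ∀ x y : L, B (J x) (J y) = B x y

variable {J : L →ₗ[ℝ] L}

/-- The Kähler form `ω(x,y) = ⟨Jx, y⟩`. -/
def HermMetric.omega (g : HermMetric J) (x y : L) : ℝ := g.B (J x) y

/-- Exterior differential of the Kähler form. -/
def HermMetric.dOmega (g : HermMetric J) (x y z : L) : ℝ :=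
  - g.omega ⁅x, y⁆ z + g.omega ⁅x, z⁆ y - g.omega ⁅y, z⁆ x

/-- `dᶜω (x,y,z) = -dω(Jx, Jy, Jz)`. -/
def HermMetric.dcOmega (g : HermMetric J) (x y z : L) : ℝ :=
  - g.dOmega (J x) (J y) (J z)

/-- `d(dᶜω)` as a 4-form. -/
def HermMetric.ddcOmega (g : HermMetric J) (x y z w : L) : ℝ :=
  - g.dcOmega ⁅x, y⁆ z w + g.dcOmega ⁅x, z⁆ y w - g.dcOmega ⁅x, w⁆ y z
  - g.dcOmega ⁅y, z⁆ x w + g.dcOmega ⁅y, w⁆ x z - g.dcOmega ⁅z, w⁆ x y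

/-- The metric is Kähler if `dω = 0`. -/
def HermMetric.IsKahler (g : HermMetric J) : Prop :=
  ∀ x y z : L, g.dOmega x y z = 0

/-- The metric is pluriclosed if `d(dᶜω) = 0`. -/
def HermMetric.IsPluriclosed (g : HermMetric J) : Prop :=
  ∀ x y z w : L, g.ddcOmega x y z w = 0

/-- The metric is balanced (dimension `2n`): for every orthonormal basis `f`,
`Σ_k dω(f_k, J f_k, x) = 0` for all `x`. -/
def HermMetric.IsBalanced (g : HermMetric J) (n : ℕ) : Prop :=
  ∀ f : Basis (Fin (2 * n)) ℝ L,
    (∀ i j, g.B (f i) (f j) = if i = j then 1 else 0) →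
    ∀ x : L, (∑ k, g.dOmega (f k) (J (f k)) x) = 0

end Defs

lemma evenDim {V : Type*} [AddCommGroup V] [Module ℝ V] [FiniteDimensional ℝ V]
    (f : V →ₗ[ℝ] V) (hf : ∀ v, f (f v) = -v) : Even (finrank ℝ V) := by
  by_contra hodd
  have h1 : f ∘ₗ f = -LinearMap.id := by ext v; simp [hf v]
  have h2 : LinearMap.det f * LinearMap.det f = (-1 : ℝ) ^ finrank ℝ V := by
    rw [← LinearMap.det_comp, h1]
    have : (-LinearMap.id : V →ₗ[ℝ] V) = (-1 : ℝ) • LinearMap.id := by ext v; simp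
    rw [this, LinearMap.det_smul, LinearMap.det_id, mul_one]
  rw [Odd.neg_one_pow (Nat.not_even_iff_odd.mp hodd)] at h2
  nlinarith [sq_nonneg (LinearMap.det f)]

lemma supJtop {L : Type*} [AddCommGroup L] [Module ℝ L] [FiniteDimensional ℝ L]
    (a : Submodule ℝ L) (hcodim : finrank ℝ ↥a + 2 = finrank ℝ L)
    (J : L →ₗ[ℝ] L) (hJJ : ∀ x : L, J (J x) = -x)
    (hJa : a.map J ≠ a) : a ⊔ a.map J = ⊤ := by
  set W := a ⊔ a.map J with hW
  have hJinj : Function.Injective J := by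
    intro u v h
    have := congrArg J h
    rw [hJJ, hJJ] at this
    simpa using this
  have hmapW : ∀ w ∈ W, J w ∈ W := by
    intro w hw
    rw [Submodule.mem_sup] at hw
    obtain ⟨u, hu, v, hv, rfl⟩ := hw
    rw [Submodule.mem_map] at hv
    obtain ⟨m, hm, rfl⟩ := hv
    rw [map_add, hJJ]
    exact Submodule.add_mem _ (Submodule.mem_sup_right (Submodule.mem_map_of_mem hu))
      (Submodule.mem_sup_left (neg_mem hm))
  have hWeven : Even (finrank ℝ ↥W) := by
    apply evenDim (J.restrict hmapW)
    intro v
    ext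
    simp [LinearMap.restrict_apply, hJJ]
  have hLeven : Even (finrank ℝ L) := evenDim J hJJ
  have hlt : finrank ℝ ↥a < finrank ℝ ↥W := by
    apply Submodule.finrank_lt_finrank_of_lt
    refine lt_of_le_of_ne le_sup_left fun h => hJa ?_
    have hle : a.map J ≤ a := le_sup_right.trans h.ge
    have hJsurj : Function.Surjective J := fun x => ⟨-J x, by rw [map_neg, hJJ]; simp⟩
    have : finrank ℝ ↥(a.map J) = finrank ℝ ↥a := by
      have := LinearEquiv.finrank_map_eq (LinearEquiv.ofBijective J ⟨hJinj, hJsurj⟩) a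
      rwa [show ((LinearEquiv.ofBijective J ⟨hJinj, hJsurj⟩ : L ≃ₗ[ℝ] L) : L →ₗ[ℝ] L) = J from
        LinearMap.ext fun _ => rfl] at this
    exact Submodule.eq_of_le_of_finrank_le hle this.ge
  have hWle : finrank ℝ ↥W ≤ finrank ℝ L := Submodule.finrank_le W
  have : finrank ℝ ↥W = finrank ℝ L := by
    obtain ⟨k, hk⟩ := hWeven; obtain ⟨m, hm⟩ := hLeven; omega
  exact Submodule.eq_top_of_finrank_eq this

theorem stmt6
    {L : Type*} [LieRing L] [LieAlgebra ℝ L] [FiniteDimensional ℝ L]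
    (a : LieIdeal ℝ L)
    (habel : ∀ u ∈ a.toSubmodule, ∀ v ∈ a.toSubmodule, ⁅u, v⁆ = (0 : L))
    (hcodim : finrank ℝ ↥a.toSubmodule + 2 = finrank ℝ L)
    (J : L →ₗ[ℝ] L) (hJ : IsComplexStructure J)
    (hJa : a.toSubmodule.map J ≠ a.toSubmodule)
    (hnonab : ¬ ∀ u v : L, ⁅u, v⁆ ∈ a.toSubmodule)
    (aJ a' bb : Submodule ℝ L)
    (haJ : aJ = a.toSubmodule ⊓ a.toSubmodule.map J)
    (ha' : a' = a.toSubmodule ⊔ Submodule.span ℝ {z : L | ∃ u v : L, ⁅u, v⁆ = z})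
    (hbb : bb = a.toSubmodule ⊓ a'.map J)
    :
    (∀ z : L, ∀ u ∈ aJ, ⁅z, u⁆ ∈ aJ) ∧
    (∀ x y : L, x ∈ bb → x ∉ aJ → y ∈ a.toSubmodule →
      a.toSubmodule = aJ ⊔ Submodule.span ℝ {x} ⊔ Submodule.span ℝ {y} →
      (∀ (s t : ℝ) (u : L), u ∈ aJ → s • x + t • y + u = 0 → s = 0 ∧ t = 0) →
      ∀ a₀ b₀ c₀ d₀ : ℝ,
        ⁅J x, x⁆ - (a₀ • x + b₀ • y) ∈ aJ →
        ⁅J x, y⁆ - (c₀ • x + d₀ • y) ∈ aJ →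
        d₀ = -a₀ ∧ a₀ ^ 2 + b₀ * c₀ = 0) := by
  obtain ⟨hJJ, hint⟩ := hJ
  have hidl : ∀ (z w : L), w ∈ a.toSubmodule → ⁅z, w⁆ ∈ a.toSubmodule := by
    intro z w hw
    rw [LieSubmodule.mem_toSubmodule] at *
    exact a.lie_mem hw
  have hidl' : ∀ (z w : L), w ∈ a.toSubmodule → ⁅w, z⁆ ∈ a.toSubmodule := by
    intro z w hw
    rw [← lie_skew]
    exact neg_mem (hidl z w hw)
  have htop : a.toSubmodule ⊔ a.toSubmodule.map J = ⊤ :=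
    supJtop a.toSubmodule hcodim J hJJ hJa
  -- Part 1 : aJ is an ideal
  have part1 : ∀ z : L, ∀ u ∈ aJ, ⁅z, u⁆ ∈ aJ := by
    intro z u hu
    rw [haJ, Submodule.mem_inf] at hu
    obtain ⟨hua, v, hv, hJv⟩ := hu
    have hJu : J u ∈ a.toSubmodule := by
      rw [← hJv, hJJ]; exact neg_mem hv
    have hz : z ∈ a.toSubmodule ⊔ a.toSubmodule.map J := htop ▸ Submodule.mem_top
    rw [Submodule.mem_sup] at hz
    obtain ⟨p, hp, jq, hjq, rfl⟩ := hz
    obtain ⟨q, hq, rfl⟩ := hjq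
    have h0 : ⁅p + J q, u⁆ = ⁅J q, u⁆ := by
      rw [add_lie, habel p hp u hua, zero_add]
    have hJbr : J ⁅J q, u⁆ = ⁅J q, J u⁆ := by
      have h6 := hint q u
      rw [habel q hq u hua, habel q hq (J u) hJu] at h6
      simp only [map_zero, add_zero, zero_sub] at h6
      linear_combination (norm := module) h6
    rw [haJ, Submodule.mem_inf, h0]
    refine ⟨hidl _ _ hua, ⟨-⁅J q, J u⁆, neg_mem (hidl _ _ hJu), ?_⟩⟩
    rw [map_neg, ← hJbr, hJJ, neg_neg]
  refine ⟨part1, ?_⟩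
  intro x y hxbb hxnaJ hy hdecomp hindep a₀ b₀ c₀ d₀ hK0 hK1
  have hxa : x ∈ a.toSubmodule := by
    rw [hbb, Submodule.mem_inf] at hxbb; exact hxbb.1
  have haJa : aJ ≤ a.toSubmodule := by rw [haJ]; exact inf_le_left
  -- decomposition inside a
  have hdec : ∀ w ∈ a.toSubmodule, ∃ k ∈ aJ, ∃ s t : ℝ, w = k + (s • x + t • y) := by
    intro w hw
    rw [hdecomp, Submodule.mem_sup] at hw
    obtain ⟨m, hm, ty, hty, rfl⟩ := hw
    rw [Submodule.mem_sup] at hm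
    obtain ⟨k, hk, sx, hsx, rfl⟩ := hm
    rw [Submodule.mem_span_singleton] at hsx hty
    obtain ⟨s, rfl⟩ := hsx; obtain ⟨t, rfl⟩ := hty
    exact ⟨k, hk, s, t, by abel⟩
  -- decomposition of the whole space
  have hLdec : ∀ z : L, ∃ u ∈ a.toSubmodule, ∃ s t : ℝ, z = u + s • J x + t • J y := by
    intro z
    have hz : z ∈ a.toSubmodule ⊔ a.toSubmodule.map J := htop ▸ Submodule.mem_top
    rw [Submodule.mem_sup] at hz
    obtain ⟨u₁, hu₁, jv, hjv, rfl⟩ := hz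
    obtain ⟨v, hv, rfl⟩ := hjv
    obtain ⟨k, hk, s, t, rfl⟩ := hdec v hv
    have hJk : J k ∈ a.toSubmodule := by
      rw [haJ, Submodule.mem_inf] at hk
      obtain ⟨-, m, hm, rfl⟩ := hk
      rw [hJJ]; exact neg_mem hm
    refine ⟨u₁ + J k, add_mem hu₁ hJk, s, t, ?_⟩
    rw [map_add, map_add, map_smul, map_smul]
    abel
  -- all brackets lie in a + span{⁅Jx,Jy⁆}
  have hTlie : ∀ u v : L, ⁅u, v⁆ ∈ a.toSubmodule ⊔ Submodule.span ℝ {⁅J x, J y⁆} := by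
    intro u v
    obtain ⟨u₁, hu₁, s₁, t₁, rfl⟩ := hLdec u
    obtain ⟨u₂, hu₂, s₂, t₂, rfl⟩ := hLdec v
    have m_a : ∀ w : L, w ∈ a.toSubmodule →
        w ∈ a.toSubmodule ⊔ Submodule.span ℝ {⁅J x, J y⁆} :=
      fun w hw => Submodule.mem_sup_left hw
    have h1 : ⁅u₁, u₂ + s₂ • J x + t₂ • J y⁆ ∈
        a.toSubmodule ⊔ Submodule.span ℝ {⁅J x, J y⁆} := m_a _ (hidl' _ _ hu₁)
    have h2 : ⁅J x, u₂ + s₂ • J x + t₂ • J y⁆ ∈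
        a.toSubmodule ⊔ Submodule.span ℝ {⁅J x, J y⁆} := by
      rw [lie_add, lie_add, lie_smul, lie_smul, lie_self, smul_zero, add_zero]
      exact add_mem (m_a _ (hidl _ _ hu₂))
        (Submodule.mem_sup_right (Submodule.smul_mem _ _ (Submodule.mem_span_singleton_self _)))
    have h3 : ⁅J y, u₂ + s₂ • J x + t₂ • J y⁆ ∈
        a.toSubmodule ⊔ Submodule.span ℝ {⁅J x, J y⁆} := by
      rw [lie_add, lie_add, lie_smul, lie_smul, lie_self, smul_zero, add_zero,
        show ⁅J y, J x⁆ = -⁅J x, J y⁆ by rw [← lie_skew]]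
      exact add_mem (m_a _ (hidl _ _ hu₂))
        (Submodule.mem_sup_right (Submodule.smul_mem _ _
          (neg_mem (Submodule.mem_span_singleton_self _))))
    rw [add_lie, add_lie, smul_lie, smul_lie]
    exact add_mem (add_mem h1 (Submodule.smul_mem _ _ h2)) (Submodule.smul_mem _ _ h3)
  have ha'le : a' ≤ a.toSubmodule ⊔ Submodule.span ℝ {⁅J x, J y⁆} := by
    rw [ha']
    refine sup_le le_sup_left (Submodule.span_le.mpr ?_)
    rintro z ⟨u, v, rfl⟩
    exact hTlie u v
  -- extract α
  have hxmap : x ∈ a'.map J := by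
    rw [hbb, Submodule.mem_inf] at hxbb; exact hxbb.2
  obtain ⟨w, hw, hJw⟩ := hxmap
  have hw' := ha'le hw
  rw [Submodule.mem_sup] at hw'
  obtain ⟨u, hu, m, hm, rfl⟩ := hw'
  rw [Submodule.mem_span_singleton] at hm
  obtain ⟨t, rfl⟩ := hm
  obtain ⟨w₀, hw₀, α, β, hc⟩ := hLdec ⁅J x, J y⁆
  have h5 : J u + t • (J w₀ + α • (-x) + β • (-y)) = x := by
    have h5 := hJw
    rw [map_add, map_smul, hc] at h5
    simpa only [map_add, map_smul, hJJ] using h5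
  have heq : J u + t • J w₀ = (1 + t * α) • x + (t * β) • y := by
    linear_combination (norm := module) h5
  have hmemJ : J u + t • J w₀ ∈ aJ := by
    rw [haJ, Submodule.mem_inf]
    constructor
    · rw [heq]
      exact add_mem (Submodule.smul_mem _ _ hxa) (Submodule.smul_mem _ _ hy)
    · exact ⟨u + t • w₀, add_mem hu (Submodule.smul_mem _ _ hw₀),
        by rw [map_add, map_smul]⟩
  have hzero : (1 + t * α) • x + (t * β) • y + (-(J u + t • J w₀)) = 0 := by
    rw [heq]; module
  obtain ⟨h1, h2⟩ := hindep _ _ _ (neg_mem hmemJ) hzero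
  have htne : t ≠ 0 := by intro h; rw [h] at h1; simp at h1
  have hαne : α ≠ 0 := by intro h; rw [h] at h1; simp at h1
  have hβ : β = 0 := by
    rcases mul_eq_zero.mp h2 with h | h
    · exact absurd h htne
    · exact h
  have hc' : ⁅J x, J y⁆ = w₀ + α • J x := by
    rw [hc, hβ]; simp
  -- integrability on (x,y)
  have hcv : ⁅J x, J y⁆ = J ⁅J x, y⁆ + J ⁅x, J y⁆ := by
    have h6 := hint x y
    rw [habel x hxa y hy] at h6
    linear_combination (norm := module) -h6
  have hvax : ⁅J x, y⁆ + ⁅x, J y⁆ - α • x ∈ aJ := by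
    rw [haJ, Submodule.mem_inf]
    constructor
    · exact sub_mem (add_mem (hidl _ _ hy) (hidl' _ _ hxa)) (Submodule.smul_mem _ _ hxa)
    · refine ⟨-w₀, neg_mem hw₀, ?_⟩
      have h3 : J ⁅J x, J y⁆ = J w₀ - α • x := by
        rw [hc', map_add, map_smul, hJJ]; module
      have h4 : J ⁅J x, J y⁆ = -(⁅J x, y⁆ + ⁅x, J y⁆) := by
        rw [hcv, ← map_add, hJJ]
      rw [map_neg]
      linear_combination (norm := module) h3 - h4
  -- decompositions of the four basic brackets
  obtain ⟨k₀, hk₀, hb0⟩ : ∃ k, k ∈ aJ ∧ ⁅J x, x⁆ = k + (a₀ • x + b₀ • y) :=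
    ⟨⁅J x, x⁆ - (a₀ • x + b₀ • y), hK0, by abel⟩
  obtain ⟨k₁, hk₁, hb1⟩ : ∃ k, k ∈ aJ ∧ ⁅J x, y⁆ = k + (c₀ • x + d₀ • y) :=
    ⟨⁅J x, y⁆ - (c₀ • x + d₀ • y), hK1, by abel⟩
  obtain ⟨k₂, hk₂, p, q, hb2⟩ := hdec ⁅J y, x⁆ (hidl _ _ hxa)
  obtain ⟨k₃, hk₃, r, s, hb3⟩ := hdec ⁅J y, y⁆ (hidl _ _ hy)
  -- relation p = c₀ - α, q = d₀
  have hsk : ⁅x, J y⁆ = -⁅J y, x⁆ := (lie_skew _ _).symm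
  have hpq0 : (c₀ - α - p) • x + (d₀ - q) • y +
      (k₁ - k₂ - (⁅J x, y⁆ + ⁅x, J y⁆ - α • x)) = 0 := by
    linear_combination (norm := module) -hb1 + hb2 - hsk
  obtain ⟨hp_eq, hq_eq⟩ := hindep _ _ _
    (sub_mem (sub_mem hk₁ hk₂) hvax) hpq0
  -- Jacobi identity equations
  have hJac1 : α • ⁅J x, x⁆ = ⁅J x, ⁅J y, x⁆⁆ - ⁅J y, ⁅J x, x⁆⁆ := by
    rw [← lie_lie]
    rw [hc', add_lie, smul_lie, habel w₀ hw₀ x hxa, zero_add]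
  have hJac2 : α • ⁅J x, y⁆ = ⁅J x, ⁅J y, y⁆⁆ - ⁅J y, ⁅J x, y⁆⁆ := by
    rw [← lie_lie]
    rw [hc', add_lie, smul_lie, habel w₀ hw₀ y hy, zero_add]
  have e2 : ⁅J x, ⁅J y, x⁆⁆ = ⁅J x, k₂⁆ + (p • ⁅J x, x⁆ + q • ⁅J x, y⁆) := by
    rw [hb2]; simp only [lie_add, lie_smul]
  have e3 : ⁅J y, ⁅J x, x⁆⁆ = ⁅J y, k₀⁆ + (a₀ • ⁅J y, x⁆ + b₀ • ⁅J y, y⁆) := by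
    rw [hb0]; simp only [lie_add, lie_smul]
  have e4 : ⁅J x, ⁅J y, y⁆⁆ = ⁅J x, k₃⁆ + (r • ⁅J x, x⁆ + s • ⁅J x, y⁆) := by
    rw [hb3]; simp only [lie_add, lie_smul]
  have e5 : ⁅J y, ⁅J x, y⁆⁆ = ⁅J y, k₁⁆ + (c₀ • ⁅J y, x⁆ + d₀ • ⁅J y, y⁆) := by
    rw [hb1]; simp only [lie_add, lie_smul]
  rw [e2, e3, hb0, hb1, hb2, hb3] at hJac1
  rw [e4, e5, hb0, hb1, hb2, hb3] at hJac2
  have hE12 : (p * a₀ + q * c₀ - a₀ * p - b₀ * r - α * a₀) • x +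
      (p * b₀ + q * d₀ - a₀ * q - b₀ * s - α * b₀) • y +
      (⁅J x, k₂⁆ - ⁅J y, k₀⁆ + p • k₀ + q • k₁ - a₀ • k₂ - b₀ • k₃ - α • k₀) = 0 := by
    linear_combination (norm := module) -hJac1
  have hE34 : (r * a₀ + s * c₀ - c₀ * p - d₀ * r - α * c₀) • x +
      (r * b₀ + s * d₀ - c₀ * q - d₀ * s - α * d₀) • y +
      (⁅J x, k₃⁆ - ⁅J y, k₁⁆ + r • k₀ + s • k₁ - c₀ • k₂ - d₀ • k₃ - α • k₁) = 0 := by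
    linear_combination (norm := module) -hJac2
  have hU1 : ⁅J x, k₂⁆ - ⁅J y, k₀⁆ + p • k₀ + q • k₁ - a₀ • k₂ - b₀ • k₃ - α • k₀ ∈ aJ := by
    exact sub_mem (sub_mem (sub_mem (add_mem (add_mem (sub_mem (part1 _ _ hk₂) (part1 _ _ hk₀))
      (Submodule.smul_mem _ _ hk₀)) (Submodule.smul_mem _ _ hk₁))
      (Submodule.smul_mem _ _ hk₂)) (Submodule.smul_mem _ _ hk₃)) (Submodule.smul_mem _ _ hk₀)
  have hU2 : ⁅J x, k₃⁆ - ⁅J y, k₁⁆ + r • k₀ + s • k₁ - c₀ • k₂ - d₀ • k₃ - α • k₁ ∈ aJ := by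
    exact sub_mem (sub_mem (sub_mem (add_mem (add_mem (sub_mem (part1 _ _ hk₃) (part1 _ _ hk₁))
      (Submodule.smul_mem _ _ hk₀)) (Submodule.smul_mem _ _ hk₁))
      (Submodule.smul_mem _ _ hk₂)) (Submodule.smul_mem _ _ hk₃)) (Submodule.smul_mem _ _ hk₁)
  obtain ⟨hE1, hE2⟩ := hindep _ _ _ hU1 hE12
  obtain ⟨hE3, hE4⟩ := hindep _ _ _ hU2 hE34
  have hp' : p = c₀ - α := by linarith
  have hq' : q = d₀ := by linarith
  subst hp'
  have hd : d₀ = -a₀ := by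
    apply mul_left_cancel₀ hαne
    linear_combination -hE1 - hE4
  refine ⟨hd, ?_⟩
  subst hd
  subst hq'
  have h2α : (-2 : ℝ) * α ≠ 0 := by
    intro h
    rcases mul_eq_zero.mp h with h | h
    · norm_num at h
    · exact hαne h
  apply mul_left_cancel₀ h2α
  linear_combination c₀ * hE2 + b₀ * hE3 + 2 * a₀ * hE1
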